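/- Let T be a semigroup with the F-property and let T⁰ = T ∪ {0} be T with an adjoined zero. Let τ_Ac be the topology on T⁰ in which every element of T is an isolated point and the neighbourhoods of 0 are exactly the sets U ⊆ T⁰ with 0 ∈ U and T⁰ \ U finite. Then (T⁰, τ_Ac) is a Hausdorff compact semitopological semigroup. -/
import Mathlib

open Topology Filter


/-- A semigroup `T` with an adjoined zero: `T⁰ = T ∪ {0}`, where `none` plays the
role of the zero and `0·x = x·0 = 0·0 = 0`. -/
def adjZeroMul {T : Type*} [Mul T] : Option T → Option T → Option T
  | some a, some b => some (a * b)
  | _, _ => none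

lemma adjZeroMul_none_left {T : Type*} [Mul T] (x : Option T) :
    adjZeroMul none x = none := by cases x <;> rfl

lemma adjZeroMul_none_right {T : Type*} [Mul T] (x : Option T) :
    adjZeroMul x none = none := by cases x <;> rfl

/-- Lemma 3.7: if `T` is a semigroup with the F-property (for all `a, b ∈ T` the
sets `{x : a·x = b}` and `{x : x·a = b}` are finite) and `τ_Ac` is the topology on
`T⁰ = T ∪ {0}` in which every element of `T` is isolated and the neighbourhoods of
`0` are exactly the sets `U ∋ 0` with finite complement, then `(T⁰, τ_Ac)` is a
Hausdorff compact semitopological semigroup. -/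
theorem statement10 {T : Type*} [Semigroup T]
    (hFprop : ∀ a b : T, {x : T | a * x = b}.Finite ∧ {x : T | x * a = b}.Finite)
    (τ : TopologicalSpace (Option T))
    (hiso : ∀ t : T, @IsOpen _ τ {some t})
    (hnhds : ∀ U : Set (Option T),
      U ∈ @nhds _ τ none ↔ (none ∈ U ∧ Uᶜ.Finite)) :
    @T2Space _ τ ∧ @CompactSpace _ τ ∧
      ∀ a : Option T, @Continuous _ _ τ τ (fun x => adjZeroMul a x) ∧
        @Continuous _ _ τ τ (fun x => adjZeroMul x a) := by
  letI := τ
  have hpure : ∀ t : T, 𝓝 (some t) = pure (some t) := fun t =>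
    isOpen_singleton_iff_nhds_eq_pure _ |>.mp (hiso t)
  have hdisj : ∀ x : T, Disjoint (𝓝 none) (pure (some x)) := by
    intro x
    rw [Filter.disjoint_iff]
    refine ⟨({some x}ᶜ : Set (Option T)), ?_, {some x}, rfl, by simp⟩
    rw [hnhds]
    simp
  -- every element of a finite complement nhd; continuity at none helper
  have hcontAtNone : ∀ f : Option T → Option T, f none = none →
      (∀ U : Set (Option T), none ∈ U → Uᶜ.Finite → {x | f x ∉ U}.Finite) →
      ContinuousAt f none := by
    intro f hf0 hfin
    intro U hU
    rw [hf0] at hU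
    rw [hnhds] at hU
    rw [Filter.mem_map, hnhds]
    constructor
    · simpa [hf0] using hU.1
    · exact hfin U hU.1 hU.2
  refine ⟨?_, ?_, ?_⟩
  · -- T2
    rw [t2Space_iff_disjoint_nhds]
    rintro (_ | a) (_ | b) hne
    · simp at hne
    · rw [hpure]; exact hdisj b
    · rw [hpure]; exact (hdisj a).symm
    · rw [hpure, hpure, Filter.disjoint_pure_pure]
      simpa using hne
  · -- compact
    refine ⟨?_⟩
    rw [isCompact_iff_ultrafilter_le_nhds]
    intro f _
    by_cases h : ∃ x : Option T, {x} ∈ f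
    · obtain ⟨x, hx⟩ := h
      refine ⟨x, Set.mem_univ x, ?_⟩
      intro U hU
      exact f.mem_of_superset hx (by simpa using mem_of_mem_nhds hU)
    · push_neg at h
      refine ⟨none, Set.mem_univ _, ?_⟩
      intro U hU
      rw [hnhds] at hU
      have : Uᶜᶜ ∈ f := by
        have : ∀ x ∈ hU.2.toFinset, ({x}ᶜ : Set (Option T)) ∈ f := by
          intro x _
          exact (Ultrafilter.compl_mem_iff_notMem.mpr (h x))
        have hmem : (⋂ x ∈ hU.2.toFinset, ({x}ᶜ : Set (Option T))) ∈ f :=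
          (Filter.biInter_finset_mem _).mpr this
        refine f.mem_of_superset hmem ?_
        intro y hy
        simp only [Set.mem_iInter, Set.mem_compl_iff, Set.mem_singleton_iff] at hy
        simp only [Set.mem_compl_iff]
        intro hyU
        exact hy y (hU.2.mem_toFinset.mpr hyU) rfl
      rw [compl_compl] at this
      exact this
  · -- semitopological
    intro a
    have key : ∀ g : Option T → Option T, g none = none →
        (∀ U : Set (Option T), none ∈ U → Uᶜ.Finite → {x | g x ∉ U}.Finite) →
        Continuous g := by
      intro g hg0 hfin
      rw [continuous_iff_continuousAt]
      rintro (_ | t)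
      · exact hcontAtNone g hg0 hfin
      · intro U hU
        rw [Filter.mem_map, hpure]
        simpa using mem_of_mem_nhds hU
    constructor
    · cases a with
      | none =>
        have : (fun x => adjZeroMul (none : Option T) x) = fun _ => none := by
          funext x; exact adjZeroMul_none_left x
        rw [this]; exact continuous_const
      | some t =>
        refine key _ rfl ?_
        intro U hU0 hU
        have hsub : {x : Option T | adjZeroMul (some t) x ∉ U} ⊆
            some '' {s : T | some (t * s) ∈ Uᶜ} := by
          rintro (_ | s) hx
          · simp only [Set.mem_setOf_eq, adjZeroMul] at hx
            exact absurd hU0 hx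
          · exact ⟨s, hx, rfl⟩
        refine Set.Finite.subset ?_ hsub
        refine Set.Finite.image _ ?_
        have : {s : T | some (t * s) ∈ Uᶜ} ⊆
            ⋃ c ∈ hU.toFinset, {s : T | some (t * s) = c} := by
          intro s hs
          exact Set.mem_biUnion (hU.mem_toFinset.mpr hs) rfl
        refine Set.Finite.subset (Set.Finite.biUnion hU.toFinset.finite_toSet ?_) this
        rintro (_ | b) _
        · simp
        · have := (hFprop t b).1
          refine this.subset ?_
          intro s hs
          simpa using hs
    · cases a with
      | none =>
        have : (fun x => adjZeroMul x (none : Option T)) = fun _ => none := by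
          funext x; exact adjZeroMul_none_right x
        rw [this]; exact continuous_const
      | some t =>
        refine key _ rfl ?_
        intro U hU0 hU
        have hsub : {x : Option T | adjZeroMul x (some t) ∉ U} ⊆
            some '' {s : T | some (s * t) ∈ Uᶜ} := by
          rintro (_ | s) hx
          · simp only [Set.mem_setOf_eq, adjZeroMul] at hx
            exact absurd hU0 hx
          · exact ⟨s, hx, rfl⟩
        refine Set.Finite.subset ?_ hsub
        refine Set.Finite.image _ ?_
        have : {s : T | some (s * t) ∈ Uᶜ} ⊆
            ⋃ c ∈ hU.toFinset, {s : T | some (s * t) = c} := by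
          intro s hs
          exact Set.mem_biUnion (hU.mem_toFinset.mpr hs) rfl
        refine Set.Finite.subset (Set.Finite.biUnion hU.toFinset.finite_toSet ?_) this
        rintro (_ | b) _
        · simp
        · have := (hFprop t b).2
          refine this.subset ?_
          intro s hs
          simpa using hs
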